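/- (q-problème de parties) For all positive integers a, b: p^a ∑_{ℓ=0}^{b-1} [a+ℓ-1 choose a-1]_q q^ℓ (1−·p)^ℓ + (1−·p)^b ∑_{ℓ=0}^{a-1} [b+ℓ-1 choose b-1]_q p^ℓ = 1. -/
import Mathlib


/-- The `q`-analog `[n]_q = 1 + q + ⋯ + q^(n-1)` of a natural number. -/
def qNum {R : Type*} [CommRing R] (q : R) (n : ℕ) : R := ∑ i ∈ Finset.range n, q ^ i

/-- The `q`-factorial `[n]! = [1][2]⋯[n]`. -/
def qFact {R : Type*} [CommRing R] (q : R) (n : ℕ) : R := ∏ i ∈ Finset.range n, qNum q (i + 1)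

/-- The Gaussian (`q`-)binomial coefficient, via the `q`-Pascal recursion. -/
def qBinom {R : Type*} [CommRing R] (q : R) : ℕ → ℕ → R
  | _, 0 => 1
  | 0, _ + 1 => 0
  | n + 1, k + 1 => qBinom q n k + q ^ (k + 1) * qBinom q n (k + 1)

/-- The `q`-shifted product `(1 −· p)^m = ∏_{i=0}^{m-1} (1 - p q^i)`. -/
def qProdSub {R : Type*} [CommRing R] (q p : R) (m : ℕ) : R :=
  ∏ i ∈ Finset.range m, (1 - p * q ^ i)

/-- The `q`-shifted power `(x +· y)^m = ∏_{i=0}^{m-1} (x + q^i y)`. -/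
def qProdAdd {R : Type*} [CommRing R] (q x y : R) (m : ℕ) : R :=
  ∏ i ∈ Finset.range m, (x + q ^ i * y)
section QAux
variable {R : Type*} [CommRing R] (q p : R)

lemma qBinom_zero_right (n : ℕ) : qBinom q n 0 = 1 := by cases n <;> rfl

lemma qBinom_succ_succ (n k : ℕ) :
    qBinom q (n + 1) (k + 1) = qBinom q n k + q ^ (k + 1) * qBinom q n (k + 1) := rfl

lemma qBinom_eq_zero : ∀ {n k : ℕ}, n < k → qBinom q n k = 0
  | 0, _ + 1, _ => rfl
  | n + 1, k + 1, h => by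
      rw [qBinom_succ_succ, qBinom_eq_zero (show n < k by omega),
        qBinom_eq_zero (show n < k + 1 by omega)]
      ring

lemma qBinom_self : ∀ n : ℕ, qBinom q n n = 1
  | 0 => rfl
  | n + 1 => by
      rw [qBinom_succ_succ, qBinom_self n, qBinom_eq_zero q (show n < n + 1 by omega)]
      ring

lemma qBinom_one (n : ℕ) : qBinom q n 1 = ∑ i ∈ Finset.range n, q ^ i := by
  induction n with
  | zero => rfl
  | succ n ih =>
      rw [qBinom_succ_succ, qBinom_zero_right, ih, geom_sum_succ]
      ring

lemma qBinom_pascal' : ∀ n : ℕ, ∀ k ≤ n,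
    qBinom q (n + 1) (k + 1) = q ^ (n - k) * qBinom q n k + qBinom q n (k + 1)
  | 0, 0, _ => by
      simp [qBinom_succ_succ, qBinom_self, qBinom_eq_zero q (show 0 < 1 by omega)]
  | n + 1, 0, _ => by
      rw [qBinom_succ_succ, qBinom_zero_right, qBinom_one, Nat.sub_zero]
      have h1 : q * ∑ i ∈ Finset.range (n + 1), q ^ i + 1
          = q ^ (n + 1) + ∑ i ∈ Finset.range (n + 1), q ^ i :=
        (geom_sum_succ (x := q) (n := n + 1)).symm.trans (geom_sum_succ' (x := q) (n := n + 1))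
      linear_combination h1
  | n + 1, k + 1, h => by
      rcases eq_or_lt_of_le h with h' | h'
      · have : k = n := by omega
        subst this
        rw [qBinom_succ_succ, qBinom_self, qBinom_eq_zero q (show k + 1 < k + 1 + 1 by omega),
          Nat.sub_self]
        ring
      · have hk : k ≤ n := by omega
        have hk1 : k + 1 ≤ n := by omega
        have R1 : qBinom q n k + q ^ (k + 1) * qBinom q n (k + 1)
            = q ^ (n - k) * qBinom q n k + qBinom q n (k + 1) :=
          (qBinom_succ_succ q n k).symm.trans (qBinom_pascal' n k hk)
        have R2 : qBinom q n (k + 1) + q ^ (k + 2) * qBinom q n (k + 2)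
            = q ^ (n - (k + 1)) * qBinom q n (k + 1) + qBinom q n (k + 2) :=
          (qBinom_succ_succ q n (k + 1)).symm.trans (qBinom_pascal' n (k + 1) hk1)
        rw [qBinom_succ_succ q (n + 1) (k + 1), qBinom_succ_succ q n k,
          qBinom_succ_succ q n (k + 1), show n + 1 - (k + 1) = n - k from by omega,
          show n - k = n - (k + 1) + 1 from by omega] at *
        linear_combination R1 + q ^ (k + 2) * R2

lemma qBinom_symm : ∀ n : ℕ, ∀ k ≤ n, qBinom q n (n - k) = qBinom q n k
  | 0, 0, _ => rfl
  | n + 1, 0, _ => by rw [Nat.sub_zero, qBinom_self, qBinom_zero_right]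
  | n + 1, k + 1, h => by
      rcases eq_or_lt_of_le h with h' | h'
      · have : k = n := by omega
        subst this
        simp [qBinom_self, qBinom_zero_right]
      · have hk : k + 1 ≤ n := by omega
        rw [show n + 1 - (k + 1) = (n - (k + 1)) + 1 from by omega, qBinom_succ_succ,
          qBinom_symm n (k + 1) hk, show n - (k + 1) + 1 = n - k from by omega,
          qBinom_symm n k (by omega), qBinom_pascal' q n k (by omega)]
        ring

lemma key_sum (c s : ℕ) :
    (1 - p * q ^ (c + 1)) * ∑ ℓ ∈ Finset.range (s + 1), qBinom q (c + 1 + ℓ) (c + 1) * p ^ ℓ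
    = (∑ ℓ ∈ Finset.range (s + 1), qBinom q (c + ℓ) c * p ^ ℓ)
      - q ^ (c + 1) * p ^ (s + 1) * qBinom q (c + 1 + s) s := by
  have hsymm : qBinom q (c + 1 + s) (c + 1) = qBinom q (c + 1 + s) s := by
    have := qBinom_symm q (c + 1 + s) s (by omega)
    rwa [show c + 1 + s - s = c + 1 from by omega] at this
  have h1 : ∑ ℓ ∈ Finset.range (s + 1), qBinom q (c + 1 + ℓ) (c + 1) * p ^ ℓ
      = (∑ ℓ ∈ Finset.range (s + 1), qBinom q (c + ℓ) c * p ^ ℓ)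
        + q ^ (c + 1) * ∑ ℓ ∈ Finset.range (s + 1), qBinom q (c + ℓ) (c + 1) * p ^ ℓ := by
    rw [Finset.mul_sum, ← Finset.sum_add_distrib]
    refine Finset.sum_congr rfl fun ℓ _ => ?_
    rw [show c + 1 + ℓ = (c + ℓ) + 1 from by omega, qBinom_succ_succ]
    ring
  have h2 : ∑ ℓ ∈ Finset.range (s + 1), qBinom q (c + ℓ) (c + 1) * p ^ ℓ
      = ∑ j ∈ Finset.range s, qBinom q (c + 1 + j) (c + 1) * p ^ (j + 1) := by
    rw [Finset.sum_range_succ' (fun ℓ => qBinom q (c + ℓ) (c + 1) * p ^ ℓ) s]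
    simp only [Nat.add_zero, pow_zero, mul_one,
      qBinom_eq_zero q (show c < c + 1 from by omega), add_zero]
    refine Finset.sum_congr rfl fun j _ => ?_
    rw [show c + (j + 1) = c + 1 + j from by omega]
  have h3 : p * ∑ ℓ ∈ Finset.range (s + 1), qBinom q (c + 1 + ℓ) (c + 1) * p ^ ℓ
      = (∑ j ∈ Finset.range s, qBinom q (c + 1 + j) (c + 1) * p ^ (j + 1))
        + qBinom q (c + 1 + s) (c + 1) * p ^ (s + 1) := by
    rw [Finset.mul_sum, ← Finset.sum_range_succ (fun j => qBinom q (c + 1 + j) (c + 1) * p ^ (j + 1)) s]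
    refine Finset.sum_congr rfl fun ℓ _ => ?_
    ring
  linear_combination h1 + q ^ (c + 1) * h2 - q ^ (c + 1) * h3
    - q ^ (c + 1) * p ^ (s + 1) * hsymm

lemma main_aux (A : ℕ) : ∀ c : ℕ,
    p ^ (A + 1) * (∑ ℓ ∈ Finset.range (c + 1), qBinom q (A + ℓ) A * q ^ ℓ * qProdSub q p ℓ)
      + qProdSub q p (c + 1) * (∑ ℓ ∈ Finset.range (A + 1), qBinom q (c + ℓ) c * p ^ ℓ) = 1
  | 0 => by
      simp only [zero_add, Finset.sum_range_one, Nat.add_zero, pow_zero, mul_one, qBinom_self,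
        qBinom_zero_right, qProdSub, Finset.range_zero, Finset.prod_empty,
        Finset.prod_range_one, one_mul]
      have hg := geom_sum_mul p (A + 1)
      linear_combination -hg
  | c + 1 => by
      have IH := main_aux A c
      have hkey := key_sum q p c A
      have hPi : qProdSub q p (c + 1 + 1) = qProdSub q p (c + 1) * (1 - p * q ^ (c + 1)) :=
        Finset.prod_range_succ _ (c + 1)
      rw [Finset.sum_range_succ (fun ℓ => qBinom q (A + ℓ) A * q ^ ℓ * qProdSub q p ℓ) (c + 1),
        hPi, show A + (c + 1) = c + 1 + A from by omega]
      linear_combination IH + qProdSub q p (c + 1) * hkey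

end QAux

/-- q-problème de parties (3.16): for positive integers a, b,
`p^a ∑_{ℓ<b} [a+ℓ-1 choose a-1] q^ℓ (1−·p)^ℓ + (1−·p)^b ∑_{ℓ<a} [b+ℓ-1 choose b-1] p^ℓ = 1`. -/
theorem q_probleme_de_parties {R : Type*} [CommRing R] (q p : R) (a b : ℕ)
    (ha : 1 ≤ a) (hb : 1 ≤ b) :
    p ^ a * (∑ ℓ ∈ Finset.range b, qBinom q (a + ℓ - 1) (a - 1) * q ^ ℓ * qProdSub q p ℓ) +
      qProdSub q p b * (∑ ℓ ∈ Finset.range a, qBinom q (b + ℓ - 1) (b - 1) * p ^ ℓ) = 1 := by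
  obtain ⟨A, rfl⟩ : ∃ A, a = A + 1 := ⟨a - 1, by omega⟩
  obtain ⟨c, rfl⟩ : ∃ c, b = c + 1 := ⟨b - 1, by omega⟩
  simp only [Nat.add_sub_cancel, show ∀ ℓ : ℕ, A + 1 + ℓ - 1 = A + ℓ from fun ℓ => by omega,
    show ∀ ℓ : ℕ, c + 1 + ℓ - 1 = c + ℓ from fun ℓ => by omega]
  exact main_aux q p A c
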